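/- Positive introspection for intensional distributed knowledge: for any formula φ with at most one free variable x, if ⊢ [x:=a](φ → K_x[x:=a]φ) for every a∈𝐀, then for every sentence α, ⊢ K_φα → K_φK_φα in the proof system LEL. -/

import Mathlib

namespace SimplicialEpistemic

/-! ## Syntax -/

inductive Formula (Ag Xv Pr : Type) : Type
  | atom : Pr → Xv → Formula Ag Xv Pr
  | top : Formula Ag Xv Pr
  | neg : Formula Ag Xv Pr → Formula Ag Xv Pr
  | and : Formula Ag Xv Pr → Formula Ag Xv Pr → Formula Ag Xv Pr
  | assign : Xv → Ag → Formula Ag Xv Pr → Formula Ag Xv Pr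
  | know : Finset Xv → Formula Ag Xv Pr → Formula Ag Xv Pr

namespace Formula

variable {Ag Xv Pr : Type} [DecidableEq Xv]

/-- Free variables of a formula. -/
def FV : Formula Ag Xv Pr → Finset Xv
  | .atom _ x => {x}
  | .top => ∅
  | .neg φ => FV φ
  | .and φ ψ => FV φ ∪ FV ψ
  | .assign x _ φ => FV φ \ {x}
  | .know Xs _ => Xs

/-- Well-formedness: in `K_X α`, the formula `α` must have no free variables.
The language `L` consists of the well-formed formulas. -/
def Wf : Formula Ag Xv Pr → Prop
  | .atom _ _ => True
  | .top => True
  | .neg φ => Wf φ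
  | .and φ ψ => Wf φ ∧ Wf ψ
  | .assign _ _ φ => Wf φ
  | .know _ α => Wf α ∧ FV α = ∅

/-- A sentence is a well-formed formula with no free variables. -/
def Sent (φ : Formula Ag Xv Pr) : Prop := Wf φ ∧ FV φ = ∅

/-- Implication `φ → ψ`, defined as `¬(φ ∧ ¬ψ)`. -/
def impl (φ ψ : Formula Ag Xv Pr) : Formula Ag Xv Pr := .neg (.and φ (.neg ψ))

/-- Biconditional `φ ↔ ψ`. -/
def fiff (φ ψ : Formula Ag Xv Pr) : Formula Ag Xv Pr := .and (impl φ ψ) (impl ψ φ)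

/-- Disjunction `φ ∨ ψ`, defined as `¬(¬φ ∧ ¬ψ)`. -/
def fdisj (φ ψ : Formula Ag Xv Pr) : Formula Ag Xv Pr := .neg (.and (.neg φ) (.neg ψ))

/-- Falsum `⊥ := ¬⊤`. -/
def fbot : Formula Ag Xv Pr := .neg .top

/-- The dual assignment operator `⟨x:=a⟩φ := ¬[x:=a]¬φ`. -/
def dia (x : Xv) (a : Ag) (φ : Formula Ag Xv Pr) : Formula Ag Xv Pr :=
  .neg (.assign x a (.neg φ))

/-- Finite conjunction of a list of formulas. -/
def bigAnd : List (Formula Ag Xv Pr) → Formula Ag Xv Pr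
  | [] => .top
  | φ :: l => .and φ (bigAnd l)

/-- Iterated assignment `[x⃗:=a⃗]φ`. -/
def assigns : List Xv → List Ag → Formula Ag Xv Pr → Formula Ag Xv Pr
  | x :: xs, a :: as, φ => .assign x a (assigns xs as φ)
  | _, _, φ => φ

/-- Substitution `φ[y/x]` of `y` for all free occurrences of `x` in `φ`. -/
def subst (x y : Xv) : Formula Ag Xv Pr → Formula Ag Xv Pr
  | .atom p z => .atom p (if z = x then y else z)
  | .top => .top
  | .neg φ => .neg (subst x y φ)
  | .and φ ψ => .and (subst x y φ) (subst x y ψ)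
  | .assign z a φ => if z = x then .assign z a φ else .assign z a (subst x y φ)
  | .know Xs α => .know (Xs.image fun z => if z = x then y else z) α

/-- Admissibility of `φ[y/x]`: `x` has no free occurrence in `φ` within the scope
of `[y:=b]` for any `b`. -/
def Adm (x y : Xv) : Formula Ag Xv Pr → Prop
  | .atom _ _ => True
  | .top => True
  | .neg φ => Adm x y φ
  | .and φ ψ => Adm x y φ ∧ Adm x y ψ
  | .assign z _ φ => z = x ∨ x ∉ FV φ ∨ (z ≠ y ∧ Adm x y φ)
  | .know _ _ => True

/-- `occurs y φ`: the variable `y` occurs (free or bound) in `φ`. -/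
def occurs (y : Xv) : Formula Ag Xv Pr → Prop
  | .atom _ z => z = y
  | .top => False
  | .neg φ => occurs y φ
  | .and φ ψ => occurs y φ ∨ occurs y ψ
  | .assign z _ φ => z = y ∨ occurs y φ
  | .know Xs α => y ∈ Xs ∨ occurs y α

/-- Propositional evaluation, treating atoms, assignment formulas and knowledge
formulas as propositional atoms. -/
def propEval (v : Formula Ag Xv Pr → Bool) : Formula Ag Xv Pr → Bool
  | .atom p x => v (.atom p x)
  | .top => true
  | .neg φ => !(propEval v φ)
  | .and φ ψ => propEval v φ && propEval v ψ
  | .assign x a φ => v (.assign x a φ)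
  | .know Xs α => v (.know Xs α)

/-- `φ` is a propositional tautology. -/
def Tautology (φ : Formula Ag Xv Pr) : Prop := ∀ v, propEval v φ = true

end Formula

/-! ## Simplicial models and their semantics -/

structure SimpModel (Ag Pr : Type) : Type 1 where
  V : Type
  faces : Set (Set V)
  χ : V → Ag
  ℓ : Pr → Set V

namespace SimpModel

variable {Ag Pr : Type}

/-- The facets: faces contained in no other face. -/
def facets (C : SimpModel Ag Pr) : Set (Set C.V) :=
  {F | F ∈ C.faces ∧ ∀ G ∈ C.faces, F ⊆ G → F = G}

/-- The conditions for being a genuine simplicial model. -/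
def IsModel (C : SimpModel Ag Pr) : Prop :=
  Nonempty C.V ∧ (∅ : Set C.V) ∉ C.faces ∧
    (∀ Y F : Set C.V, Y.Nonempty → Y ⊆ F → F ∈ C.faces → Y ∈ C.faces) ∧
    (∀ v : C.V, {v} ∈ C.faces) ∧
    (∀ F ∈ C.faces, Set.InjOn C.χ F)

end SimpModel

/-! ## First-order Kripke models and their semantics -/

structure KModel (Ag Pr : Type) : Type 1 where
  W : Type
  δ : W → Set Ag
  R : Ag → W → W → Prop
  ρ : Pr → W → Set Ag

namespace KModel

variable {Ag Pr : Type}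

/-- The conditions for being a genuine first-order Kripke model. -/
def IsModel (M : KModel Ag Pr) : Prop :=
  Nonempty M.W ∧ (∀ w : M.W, (M.δ w).Nonempty) ∧
    (∀ (a : Ag) (w v : M.W), M.R a w v → a ∈ M.δ w) ∧
    (∀ (p : Pr) (w : M.W), M.ρ p w ⊆ M.δ w)

end KModel

variable {Ag Xv Pr : Type}

/-- Simplicial satisfaction `C, F, σ ⊩ φ`. -/
def SSat [DecidableEq Xv] (C : SimpModel Ag Pr) :
    Formula Ag Xv Pr → Set C.V → (Xv → Ag) → Prop
  | .atom p x, F, σ => σ x ∈ C.χ '' (F ∩ C.ℓ p)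
  | .top, _, _ => True
  | .neg φ, F, σ => ¬ SSat C φ F σ
  | .and φ ψ, F, σ => SSat C φ F σ ∧ SSat C ψ F σ
  | .assign x a φ, F, σ => a ∈ C.χ '' F → SSat C φ F (Function.update σ x a)
  | .know Xs α, F, σ =>
      ∀ G ∈ C.facets, (∀ x ∈ Xs, σ x ∈ C.χ '' (F ∩ G)) → SSat C α G σ

/-- Kripke satisfaction `M, w, σ ⊨ φ`. -/
def KSat [DecidableEq Xv] (M : KModel Ag Pr) :
    Formula Ag Xv Pr → M.W → (Xv → Ag) → Prop
  | .atom p x, w, σ => σ x ∈ M.ρ p w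
  | .top, _, _ => True
  | .neg φ, w, σ => ¬ KSat M φ w σ
  | .and φ ψ, w, σ => KSat M φ w σ ∧ KSat M ψ w σ
  | .assign x a φ, w, σ => a ∈ M.δ w → KSat M φ w (Function.update σ x a)
  | .know Xs α, w, σ => ∀ v : M.W, (∀ x ∈ Xs, M.R (σ x) w v) → KSat M α v σ

/-! ## Bisimulations -/

/-- Bisimulation between simplicial models. -/
def IsSBisim (C D : SimpModel Ag Pr) (Z : Set (Set C.V × Set D.V)) : Prop :=
  (∀ q ∈ Z, q.1 ∈ C.facets ∧ q.2 ∈ D.facets) ∧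
    ∀ F G, (F, G) ∈ Z →
      (C.χ '' F = D.χ '' G ∧ ∀ p : Pr, C.χ '' (F ∩ C.ℓ p) = D.χ '' (G ∩ D.ℓ p)) ∧
      (∀ (As : Set Ag) (F' : Set C.V), F' ∈ C.facets → As ⊆ C.χ '' (F ∩ F') →
        ∃ G' ∈ D.facets, As ⊆ D.χ '' (G ∩ G') ∧ (F', G') ∈ Z) ∧
      (∀ (As : Set Ag) (G' : Set D.V), G' ∈ D.facets → As ⊆ D.χ '' (G ∩ G') →
        ∃ F' ∈ C.facets, As ⊆ C.χ '' (F ∩ F') ∧ (F', G') ∈ Z)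

/-- Bisimulation between first-order Kripke models. -/
def IsKBisim (M N : KModel Ag Pr) (Z : Set (M.W × N.W)) : Prop :=
  ∀ w v, (w, v) ∈ Z →
    (M.δ w = N.δ v ∧ ∀ p : Pr, M.ρ p w = N.ρ p v) ∧
    (∀ (As : Set Ag) (w' : M.W), (∀ a ∈ As, M.R a w w') →
      ∃ v' : N.W, (∀ a ∈ As, N.R a v v') ∧ (w', v') ∈ Z) ∧
    (∀ (As : Set Ag) (v' : N.W), (∀ a ∈ As, N.R a v v') →
      ∃ w' : M.W, (∀ a ∈ As, M.R a w w') ∧ (w', v') ∈ Z)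

/-! ## Local epistemic models -/

/-- (Local S5): the restriction of `R_a` to `{w | a ∈ δ(w)}` is an equivalence relation. -/
def LocalS5 (M : KModel Ag Pr) : Prop :=
  ∀ a : Ag, Equivalence (fun w v : {w : M.W // a ∈ M.δ w} => M.R a w.1 v.1)

/-- (Individually Increasing Domain). -/
def IndInc (M : KModel Ag Pr) : Prop :=
  ∀ (a : Ag) (w v : M.W), a ∈ M.δ w → M.R a w v → a ∈ M.δ v

/-- (Local Predicates). -/
def LocalPred (M : KModel Ag Pr) : Prop :=
  ∀ (p : Pr) (a : Ag) (w v : M.W), a ∈ M.ρ p w → M.R a w v → a ∈ M.ρ p v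

/-- (Collectively Decreasing Domain). -/
def CollDec (M : KModel Ag Pr) : Prop :=
  ∀ w v : M.W, (∀ a ∈ M.δ w, M.R a w v) → M.δ v ⊆ M.δ w

/-- A local epistemic model. -/
def IsLEM (M : KModel Ag Pr) : Prop :=
  LocalS5 M ∧ IndInc M ∧ LocalPred M ∧ CollDec M

/-- (Properness): `⋂_{a ∈ δ(w)} R_a(w) = {w}` for every `w`. -/
def Proper (M : KModel Ag Pr) : Prop :=
  ∀ w : M.W, {v : M.W | ∀ a ∈ M.δ w, M.R a w v} = {w}

/-! ## Properization -/

/-- `[w]_δ = ⋂_{a ∈ δ(w)} R_a(w)`. -/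
def cell (M : KModel Ag Pr) (w : M.W) : Set M.W := {v | ∀ a ∈ M.δ w, M.R a w v}

/-- The properization `M^pr` of a Kripke model. -/
noncomputable def properize (M : KModel Ag Pr) : KModel Ag Pr where
  W := {S : Set M.W // ∃ w : M.W, S = cell M w}
  δ := fun S => M.δ S.2.choose
  R := fun a S T => ∃ w v : M.W, S.1 = cell M w ∧ T.1 = cell M v ∧ M.R a w v
  ρ := fun p S => M.ρ p S.2.choose

/-! ## The maps LEM and SC -/

/-- `LEM(C)`: the first-order Kripke model associated to a simplicial model. -/
def LEMof (C : SimpModel Ag Pr) : KModel Ag Pr where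
  W := {F : Set C.V // F ∈ C.facets}
  δ := fun F => C.χ '' F.1
  R := fun a F G => a ∈ C.χ '' (F.1 ∩ G.1)
  ρ := fun p F => C.χ '' (F.1 ∩ C.ℓ p)

/-- Vertices of `SC(M)`: pairs `(a, [w]_a)` with `a ∈ δ(w)`, `[w]_a = R_a(w)`. -/
abbrev SCVert (M : KModel Ag Pr) : Type :=
  {u : Ag × Set M.W // ∃ w : M.W, u.1 ∈ M.δ w ∧ u.2 = {v : M.W | M.R u.1 w v}}

/-- `F^M_w = {(a, [w]_a) | a ∈ δ(w)}`. -/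
def SCface (M : KModel Ag Pr) (w : M.W) : Set (SCVert M) :=
  {u | u.1.1 ∈ M.δ w ∧ u.1.2 = {v : M.W | M.R u.1.1 w v}}

/-- `SC(M)`: the simplicial model associated to a Kripke model. -/
def SCof (M : KModel Ag Pr) : SimpModel Ag Pr where
  V := SCVert M
  faces := {F : Set (SCVert M) | F.Nonempty ∧ ∃ w : M.W, F ⊆ SCface M w}
  χ := fun u => u.1.1
  ℓ := fun p => {u | ∃ w : M.W, u.1.1 ∈ M.ρ p w ∧ u.1.2 = {v : M.W | M.R u.1.1 w v}}

/-! ## Isomorphisms -/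

/-- Isomorphism of first-order Kripke models. -/
structure KIso (M N : KModel Ag Pr) where
  toEquiv : M.W ≃ N.W
  δ_eq : ∀ w : M.W, N.δ (toEquiv w) = M.δ w
  R_iff : ∀ (a : Ag) (w v : M.W), N.R a (toEquiv w) (toEquiv v) ↔ M.R a w v
  ρ_eq : ∀ (p : Pr) (w : M.W), N.ρ p (toEquiv w) = M.ρ p w

/-- Isomorphism of simplicial models. -/
structure SIso (C D : SimpModel Ag Pr) where
  toEquiv : C.V ≃ D.V
  face_iff : ∀ F : Set C.V, F ∈ C.faces ↔ (toEquiv '' F) ∈ D.faces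
  χ_eq : ∀ v : C.V, D.χ (toEquiv v) = C.χ v
  ℓ_iff : ∀ (p : Pr) (v : C.V), toEquiv v ∈ D.ℓ p ↔ v ∈ C.ℓ p

/-! ## The proof system LEL -/

/-- The axiom system `LEL` (over the well-formed fragment of the language). -/
inductive LEL [DecidableEq Xv] : Formula Ag Xv Pr → Prop
  | taut {φ} : Formula.Wf φ → Formula.Tautology φ → LEL φ
  | kk {Xs : Finset Xv} {α β} : Formula.Sent α → Formula.Sent β →
      LEL (Formula.impl (.know Xs (Formula.impl α β))
        (Formula.impl (.know Xs α) (.know Xs β)))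
  | mono {Xs Ys : Finset Xv} {α} : Xs ⊆ Ys → Formula.Sent α →
      LEL (Formula.impl (.know Xs α) (.know Ys α))
  | kasgn {x : Xv} {a : Ag} {φ ψ} : Formula.Wf φ → Formula.Wf ψ →
      LEL (Formula.impl (.assign x a (Formula.impl φ ψ))
        (Formula.impl (.assign x a φ) (.assign x a ψ)))
  | det {x : Xv} {a : Ag} {φ} : Formula.Wf φ →
      LEL (Formula.impl (Formula.dia x a φ) (.assign x a φ))
  | tr {x : Xv} {a : Ag} {φ} : Formula.Wf φ → x ∉ Formula.FV φ →
      LEL (Formula.impl φ (.assign x a φ))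
  | sub {x y : Xv} {a : Ag} {φ} : Formula.Wf φ → Formula.Adm x y φ →
      LEL (.assign y a (Formula.impl (.assign x a φ) (Formula.subst x y φ)))
  | com {x y : Xv} {a b : Ag} {φ} : Formula.Wf φ → x ≠ y →
      LEL (Formula.impl (.assign x a (.assign y b φ)) (.assign y b (.assign x a φ)))
  | ui {x : Xv} {φ} (l : List Ag) : Formula.Wf φ → l.Nodup → (∀ a : Ag, a ∈ l) →
      LEL (Formula.impl (Formula.bigAnd (l.map fun a => .assign x a φ)) φ)
  | tK {Xs : Finset Xv} {α} : Formula.Sent α → LEL (Formula.impl (.know Xs α) α)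
  | kni {xs : List Xv} {as : List Ag} {α} :
      Formula.Sent α → xs.Nodup → xs.length = as.length →
      LEL (Formula.assigns xs as (Formula.impl (.neg (.know xs.toFinset α))
        (.know xs.toFinset (Formula.assigns xs as (.neg (.know xs.toFinset α))))))
  | epi {x : Xv} {a : Ag} : LEL (.assign x a (.know {x} (Formula.dia x a .top)))
  | api {x : Xv} {a : Ag} {p : Pr} :
      LEL (.assign x a (Formula.impl (.atom p x) (.know {x} (.assign x a (.atom p x)))))
  | eni {xs : List Xv} {as : List Ag} {z : Xv} (l : List Ag) :
      xs.Nodup → xs.length = as.length → l.Nodup → (∀ b : Ag, b ∈ l ↔ b ∉ as) →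
      LEL (Formula.assigns xs as
        (Formula.impl (Formula.bigAnd (l.map fun b => .assign z b Formula.fbot))
          (.know xs.toFinset (Formula.bigAnd (l.map fun b => .assign z b Formula.fbot)))))
  | mp {φ ψ} : LEL (Formula.impl φ ψ) → LEL φ → LEL ψ
  | necK {α} : Formula.Sent α → LEL α → LEL (.know ∅ α)
  | necA {x : Xv} {a : Ag} {φ} : LEL φ → LEL (.assign x a φ)

/-- `Γ` is consistent in `LEL`: no finite subset has a provably false conjunction. -/
def Consistent [DecidableEq Xv] (Γ : Set (Formula Ag Xv Pr)) : Prop :=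
  ¬ ∃ l : List (Formula Ag Xv Pr), (∀ φ ∈ l, φ ∈ Γ) ∧ LEL (.neg (Formula.bigAnd l))

end SimplicialEpistemic

namespace SimplicialEpistemic

variable {Ag Xv Pr : Type} [Fintype Ag] [DecidableEq Ag] [DecidableEq Xv]

/-- `φ!(S)`: the group defined by `φ` (with free variable `x`) is exactly `S`.
Here `ea` provides enumerations (as lists) of finite sets of agents. -/
def bang (φ : Formula Ag Xv Pr) (x : Xv) (ea : Finset Ag → List Ag)
    (S : Finset Ag) : Formula Ag Xv Pr :=
  .and (Formula.bigAnd ((ea S).map fun a => Formula.dia x a φ))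
    (Formula.bigAnd ((ea Sᶜ).map fun b => .assign x b (.neg φ)))

/-- Intensional distributed knowledge `K_φ α`, defined as
`⋀_{A ⊆ 𝐀} (φ!(A) → [x⃗_A := a⃗_A] K_{x⃗_A} α)`. -/
noncomputable def Kint (φ : Formula Ag Xv Pr) (x : Xv) (ea : Finset Ag → List Ag)
    (ev : Finset Ag → List Xv) (α : Formula Ag Xv Pr) : Formula Ag Xv Pr :=
  Formula.bigAnd (((Finset.univ : Finset (Finset Ag)).toList).map fun S =>
    Formula.impl (bang φ x ea S)
      (Formula.assigns (ev S) (ea S) (.know (ev S).toFinset α)))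

end SimplicialEpistemic


namespace SimplicialEpistemic
namespace Formula
set_option linter.unusedSectionVars false

variable {Ag Xv Pr : Type} [DecidableEq Xv]

@[simp] lemma wf_atom {p : Pr} {x : Xv} : Wf (Ag := Ag) (atom p x) := trivial
@[simp] lemma wf_top : Wf (Ag := Ag) (Xv := Xv) (Pr := Pr) top := trivial
@[simp] lemma wf_neg {φ : Formula Ag Xv Pr} : Wf (neg φ) ↔ Wf φ := Iff.rfl
@[simp] lemma wf_and {φ ψ : Formula Ag Xv Pr} : Wf (and φ ψ) ↔ Wf φ ∧ Wf ψ := Iff.rfl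
@[simp] lemma wf_assign {x : Xv} {a : Ag} {φ : Formula Ag Xv Pr} :
    Wf (assign x a φ) ↔ Wf φ := Iff.rfl
@[simp] lemma wf_know {Xs : Finset Xv} {α : Formula Ag Xv Pr} :
    Wf (know Xs α) ↔ Wf α ∧ FV α = ∅ := Iff.rfl
@[simp] lemma wf_impl {φ ψ : Formula Ag Xv Pr} : Wf (impl φ ψ) ↔ Wf φ ∧ Wf ψ := Iff.rfl
@[simp] lemma wf_dia {x : Xv} {a : Ag} {φ : Formula Ag Xv Pr} :
    Wf (dia x a φ) ↔ Wf φ := Iff.rfl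

@[simp] lemma fv_atom {p : Pr} {x : Xv} : FV (Ag := Ag) (atom p x) = {x} := rfl
@[simp] lemma fv_top : FV (Ag := Ag) (Xv := Xv) (Pr := Pr) top = ∅ := rfl
@[simp] lemma fv_neg {φ : Formula Ag Xv Pr} : FV (neg φ) = FV φ := rfl
@[simp] lemma fv_and {φ ψ : Formula Ag Xv Pr} : FV (and φ ψ) = FV φ ∪ FV ψ := rfl
@[simp] lemma fv_assign {x : Xv} {a : Ag} {φ : Formula Ag Xv Pr} :
    FV (assign x a φ) = FV φ \ {x} := rfl
@[simp] lemma fv_know {Xs : Finset Xv} {α : Formula Ag Xv Pr} : FV (know Xs α) = Xs := rfl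
@[simp] lemma fv_impl {φ ψ : Formula Ag Xv Pr} : FV (impl φ ψ) = FV φ ∪ FV ψ := rfl
@[simp] lemma fv_dia {x : Xv} {a : Ag} {φ : Formula Ag Xv Pr} :
    FV (dia x a φ) = FV φ \ {x} := rfl

@[simp] lemma pe_impl {v} {φ ψ : Formula Ag Xv Pr} :
    propEval v (impl φ ψ) = (!(propEval v φ) || propEval v ψ) := by
  simp [impl, propEval]

@[simp] lemma pe_neg {v} {φ : Formula Ag Xv Pr} :
    propEval v (neg φ) = !(propEval v φ) := rfl
@[simp] lemma pe_and {v} {φ ψ : Formula Ag Xv Pr} :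
    propEval v (and φ ψ) = (propEval v φ && propEval v ψ) := rfl
@[simp] lemma pe_top {v} : propEval (Ag := Ag) (Xv := Xv) (Pr := Pr) v top = true := rfl

/-- Wf of bigAnd -/
@[simp] lemma wf_bigAnd {l : List (Formula Ag Xv Pr)} :
    Wf (bigAnd l) ↔ ∀ φ ∈ l, Wf φ := by
  induction l with
  | nil => simp [bigAnd]
  | cons φ l ih => simp [bigAnd, ih]

@[simp] lemma fv_bigAnd {l : List (Formula Ag Xv Pr)} :
    FV (bigAnd l) = l.foldr (fun φ s => FV φ ∪ s) ∅ := by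
  induction l with
  | nil => simp [bigAnd]
  | cons φ l ih => simp [bigAnd, ih]

lemma subst_wf {x y : Xv} {φ : Formula Ag Xv Pr} (h : Wf φ) : Wf (subst x y φ) := by
  induction φ with
  | atom p z => simp [subst]
  | top => simp [subst]
  | neg φ ih => exact ih h
  | and φ ψ ih1 ih2 => exact ⟨ih1 h.1, ih2 h.2⟩
  | assign z a φ ih =>
      simp only [subst]
      split <;> [exact h; exact ih h]
  | know Xs α ih => exact h

lemma fv_assigns {xs : List Xv} {as : List Ag} {φ : Formula Ag Xv Pr}
    (h : xs.length = as.length) : FV (assigns xs as φ) = FV φ \ xs.toFinset := by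
  induction xs generalizing as with
  | nil => simp [assigns]
  | cons x xs ih =>
      cases as with
      | nil => simp at h
      | cons a as =>
          simp only [assigns, fv_assign, ih (by simpa using h), List.toFinset_cons]
          ext z; simp; tauto

lemma wf_assigns {xs : List Xv} {as : List Ag} {φ : Formula Ag Xv Pr} (h : Wf φ) :
    Wf (assigns xs as φ) := by
  induction xs generalizing as with
  | nil => simpa [assigns]
  | cons x xs ih =>
      cases as with
      | nil => simpa [assigns]
      | cons a as => exact ih (as := as)

/-- every LEL theorem is well-formed -/
lemma wf_of_lel {φ : Formula Ag Xv Pr} (h : LEL φ) : Wf φ := by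
  induction h with
  | taut h _ => exact h
  | kk hα hβ =>
      simp only [wf_impl, wf_know, fv_impl]
      exact ⟨⟨⟨hα.1, hβ.1⟩, by rw [hα.2, hβ.2]; simp⟩, ⟨hα.1, hα.2⟩, hβ.1, hβ.2⟩
  | mono _ hα =>
      simp only [wf_impl, wf_know]
      exact ⟨⟨hα.1, hα.2⟩, hα.1, hα.2⟩
  | kasgn h1 h2 => exact ⟨⟨h1, h2⟩, h1, h2⟩
  | det h => exact ⟨h, h⟩
  | tr h _ => exact ⟨h, h⟩
  | sub h _ => exact ⟨h, subst_wf h⟩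
  | com h _ => exact ⟨h, h⟩
  | ui l h _ _ =>
      refine ⟨?_, h⟩
      rw [wf_bigAnd]
      intro ψ hψ
      simp only [List.mem_map] at hψ
      obtain ⟨a, _, rfl⟩ := hψ
      exact h
  | tK hα =>
      simp only [wf_impl, wf_know]
      exact ⟨⟨hα.1, hα.2⟩, hα.1⟩
  | kni hα _ _ =>
      next hlen =>
      refine wf_assigns ?_
      simp only [wf_impl, wf_neg, wf_know]
      refine ⟨⟨hα.1, hα.2⟩, wf_assigns (by simp [wf_know, hα.1, hα.2]), ?_⟩
      rw [fv_assigns hlen]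
      simp
  | epi => exact ⟨trivial, rfl⟩
  | api => exact ⟨trivial, trivial, by simp⟩
  | eni l h1 h2 h3 h4 =>
      clear h1 h2 h3 h4
      refine wf_assigns ?_
      simp only [wf_impl, wf_know, wf_bigAnd]
      refine ⟨?_, ?_, ?_⟩
      · intro ψ hψ; simp only [List.mem_map] at hψ; obtain ⟨b, _, rfl⟩ := hψ
        simp [fbot]
      · intro ψ hψ; simp only [List.mem_map] at hψ; obtain ⟨b, _, rfl⟩ := hψ
        simp [fbot]
      · rw [fv_bigAnd]
        induction l with
        | nil => simp
        | cons b l ih => simpa [fbot] using ih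
  | mp _ _ ih1 _ => exact (wf_impl.mp ih1).2
  | necK hα _ _ => exact ⟨hα.1, hα.2⟩
  | necA _ ih => exact ih

end Formula
end SimplicialEpistemic

namespace SimplicialEpistemic
namespace Formula
set_option linter.unusedSectionVars false

variable {Ag Xv Pr : Type} [DecidableEq Xv]

variable {A B C D E : Formula Ag Xv Pr}

lemma lel_id (hA : Wf A) : LEL (impl A A) :=
  .taut (by simp [hA]) (by intro v; cases h : propEval v A <;> simp [h])

lemma lel_weaken (h : LEL B) (hA : Wf A) : LEL (impl A B) := by
  have hB := wf_of_lel h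
  refine .mp (.taut (φ := impl B (impl A B)) (by simp [hA, hB]) ?_) h
  intro v; cases h1 : propEval v A <;> cases h2 : propEval v B <;> simp [h1, h2]

lemma imp_trans (h1 : LEL (impl A B)) (h2 : LEL (impl B C)) : LEL (impl A C) := by
  have w1 := wf_of_lel h1; have w2 := wf_of_lel h2
  simp only [wf_impl] at w1 w2
  refine .mp (.mp (.taut (φ := impl (impl A B) (impl (impl B C) (impl A C)))
    (by simp [w1.1, w1.2, w2.2]) ?_) h1) h2
  intro v
  cases hA : propEval v A <;> cases hB : propEval v B <;> cases hC : propEval v C <;>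
    simp [hA, hB, hC]

lemma lel_mp2 (h1 : LEL (impl A (impl B C))) (h2 : LEL (impl A B)) : LEL (impl A C) := by
  have w1 := wf_of_lel h1; have w2 := wf_of_lel h2
  simp only [wf_impl] at w1 w2
  refine .mp (.mp (.taut
    (φ := impl (impl A (impl B C)) (impl (impl A B) (impl A C)))
    (by simp [w1.1, w1.2.1, w1.2.2, w2.2]) ?_) h1) h2
  intro v
  cases hA : propEval v A <;> cases hB : propEval v B <;> cases hC : propEval v C <;>
    simp [hA, hB, hC]

lemma and_intro_rule (h1 : LEL (impl A B)) (h2 : LEL (impl A C)) :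
    LEL (impl A (.and B C)) := by
  have w1 := wf_of_lel h1; have w2 := wf_of_lel h2
  simp only [wf_impl] at w1 w2
  refine .mp (.mp (.taut
    (φ := impl (impl A B) (impl (impl A C) (impl A (.and B C))))
    (by simp [w1.1, w1.2, w2.2]) ?_) h1) h2
  intro v
  cases hA : propEval v A <;> cases hB : propEval v B <;> cases hC : propEval v C <;>
    simp [hA, hB, hC]

lemma and_left (hA : Wf A) (hB : Wf B) : LEL (impl (.and A B) A) := by
  refine .taut (by simp [hA, hB]) ?_
  intro v; cases hA : propEval v A <;> cases hB : propEval v B <;> simp [hA, hB]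

lemma and_right (hA : Wf A) (hB : Wf B) : LEL (impl (.and A B) B) := by
  refine .taut (by simp [hA, hB]) ?_
  intro v; cases hA : propEval v A <;> cases hB : propEval v B <;> simp [hA, hB]

lemma imp_weaken_hyp (h : LEL (impl A C)) (hB : Wf B) : LEL (impl A (impl B C)) := by
  have w := wf_of_lel h; simp only [wf_impl] at w
  refine lel_mp2 (B := C) ?_ h
  refine .taut (by simp [w.1, w.2, hB]) ?_
  intro v
  cases hA : propEval v A <;> cases hB : propEval v B <;> cases hC : propEval v C <;>
    simp [hA, hB, hC]

lemma lel_curry (h : LEL (impl (.and A B) C)) : LEL (impl A (impl B C)) := by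
  have w := wf_of_lel h; simp only [wf_impl, wf_and] at w
  refine .mp (.taut (φ := impl (impl (.and A B) C) (impl A (impl B C)))
    (by simp [w.1.1, w.1.2, w.2]) ?_) h
  intro v
  cases hA : propEval v A <;> cases hB : propEval v B <;> cases hC : propEval v C <;>
    simp [hA, hB, hC]

lemma lel_uncurry (h : LEL (impl A (impl B C))) : LEL (impl (.and A B) C) := by
  have w := wf_of_lel h; simp only [wf_impl] at w
  refine .mp (.taut (φ := impl (impl A (impl B C)) (impl (.and A B) C))
    (by simp [w.1, w.2.1, w.2.2]) ?_) h
  intro v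
  cases hA : propEval v A <;> cases hB : propEval v B <;> cases hC : propEval v C <;>
    simp [hA, hB, hC]

lemma contrapose_rule (h : LEL (impl A B)) : LEL (impl (.neg B) (.neg A)) := by
  have w := wf_of_lel h; simp only [wf_impl] at w
  refine .mp (.taut (φ := impl (impl A B) (impl (.neg B) (.neg A)))
    (by simp [w.1, w.2]) ?_) h
  intro v
  cases hA : propEval v A <;> cases hB : propEval v B <;> simp [hA, hB]

lemma contrapose_rule' (h : LEL (impl (.neg A) (.neg B))) : LEL (impl B A) := by
  have w := wf_of_lel h; simp only [wf_impl, wf_neg] at w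
  refine .mp (.taut (φ := impl (impl (.neg A) (.neg B)) (impl B A))
    (by simp [w.1, w.2]) ?_) h
  intro v
  cases hA : propEval v A <;> cases hB : propEval v B <;> simp [hA, hB]

lemma contrapose_neg_right (h : LEL (impl A (.neg B))) : LEL (impl B (.neg A)) := by
  have w := wf_of_lel h; simp only [wf_impl, wf_neg] at w
  refine .mp (.taut (φ := impl (impl A (.neg B)) (impl B (.neg A)))
    (by simp [w.1, w.2]) ?_) h
  intro v
  cases hA : propEval v A <;> cases hB : propEval v B <;> simp [hA, hB]

lemma contrapose_neg_left (h : LEL (impl (.neg A) B)) : LEL (impl (.neg B) A) := by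
  have w := wf_of_lel h; simp only [wf_impl, wf_neg] at w
  refine .mp (.taut (φ := impl (impl (.neg A) B) (impl (.neg B) A))
    (by simp [w.1, w.2]) ?_) h
  intro v
  cases hA : propEval v A <;> cases hB : propEval v B <;> simp [hA, hB]

lemma lel_dne (hA : Wf A) : LEL (impl (.neg (.neg A)) A) := by
  refine .taut (by simp [hA]) ?_
  intro v; cases h : propEval v A <;> simp [h]

lemma lel_dni (hA : Wf A) : LEL (impl A (.neg (.neg A))) := by
  refine .taut (by simp [hA]) ?_
  intro v; cases h : propEval v A <;> simp [h]

/-- from `A → ¬D` and `C → D` conclude `A → (C → E)` for any wf `E`. -/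
lemma absurd_rule (h1 : LEL (impl A (.neg D))) (h2 : LEL (impl C D)) (hE : Wf E) :
    LEL (impl A (impl C E)) := by
  have w1 := wf_of_lel h1; have w2 := wf_of_lel h2
  simp only [wf_impl, wf_neg] at w1 w2
  refine .mp (.mp (.taut
    (φ := impl (impl A (.neg D)) (impl (impl C D) (impl A (impl C E))))
    (by simp [w1.1, w1.2, w2.1, hE]) ?_) h1) h2
  intro v
  cases hA : propEval v A <;> cases hC : propEval v C <;> cases hD : propEval v D <;>
    cases hE : propEval v E <;> simp [hA, hC, hD, hE]

/-- big conjunction elimination -/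
lemma bigAnd_elim {l : List (Formula Ag Xv Pr)} (hw : ∀ ψ ∈ l, Wf ψ)
    (hc : C ∈ l) : LEL (impl (bigAnd l) C) := by
  induction l with
  | nil => simp at hc
  | cons ψ l ih =>
      have hwψ : Wf ψ := hw ψ (by simp)
      have hwl : Wf (bigAnd l) := by rw [wf_bigAnd]; exact fun χ hχ => hw χ (by simp [hχ])
      rcases List.mem_cons.mp hc with rfl | hc
      · exact and_left hwψ hwl
      · exact imp_trans (and_right hwψ hwl) (ih (fun χ hχ => hw χ (by simp [hχ])) hc)

/-- big conjunction introduction -/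
lemma bigAnd_intro {l : List (Formula Ag Xv Pr)} (hA : Wf A)
    (h : ∀ ψ ∈ l, LEL (impl A ψ)) : LEL (impl A (bigAnd l)) := by
  induction l with
  | nil =>
      refine .taut (by simp [hA, bigAnd]) ?_
      intro v; cases h : propEval v A <;> simp [h, bigAnd]
  | cons ψ l ih =>
      exact and_intro_rule (h ψ (by simp)) (ih (fun χ hχ => h χ (by simp [hχ])))

end Formula
end SimplicialEpistemic

namespace SimplicialEpistemic
namespace Formula
set_option linter.unusedSectionVars false

variable {Ag Xv Pr : Type} [DecidableEq Xv]
variable {A B C : Formula Ag Xv Pr}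

/-- theorem-form of transitivity tautology -/
lemma thm_imp_trans (hA : Wf A) (hB : Wf B) (hC : Wf C) :
    LEL (impl (impl A B) (impl (impl B C) (impl A C))) := by
  refine .taut (by simp [hA, hB, hC]) ?_
  intro v
  cases h1 : propEval v A <;> cases h2 : propEval v B <;> cases h3 : propEval v C <;>
    simp [h1, h2, h3]

lemma thm_contrapose (hA : Wf A) (hB : Wf B) :
    LEL (impl (impl A B) (impl (.neg B) (.neg A))) := by
  refine .taut (by simp [hA, hB]) ?_
  intro v
  cases h1 : propEval v A <;> cases h2 : propEval v B <;> simp [h1, h2]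

lemma thm_contrapose_nn (hA : Wf A) (hB : Wf B) :
    LEL (impl (impl (.neg A) B) (impl (.neg B) A)) := by
  refine .taut (by simp [hA, hB]) ?_
  intro v
  cases h1 : propEval v A <;> cases h2 : propEval v B <;> simp [h1, h2]

lemma thm_and_intro (hA : Wf A) (hB : Wf B) :
    LEL (impl A (impl B (.and A B))) := by
  refine .taut (by simp [hA, hB]) ?_
  intro v
  cases h1 : propEval v A <;> cases h2 : propEval v B <;> simp [h1, h2]

/-- iterated assignment over a list of (variable, agent) pairs -/
def asg (l : List (Xv × Ag)) (φ : Formula Ag Xv Pr) : Formula Ag Xv Pr :=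
  l.foldr (fun p ψ => .assign p.1 p.2 ψ) φ

@[simp] lemma asg_nil {φ : Formula Ag Xv Pr} : asg [] φ = φ := rfl
@[simp] lemma asg_cons {p : Xv × Ag} {l : List (Xv × Ag)} {φ : Formula Ag Xv Pr} :
    asg (p :: l) φ = .assign p.1 p.2 (asg l φ) := rfl

lemma asg_append {l1 l2 : List (Xv × Ag)} {φ : Formula Ag Xv Pr} :
    asg (l1 ++ l2) φ = asg l1 (asg l2 φ) := by
  induction l1 with
  | nil => rfl
  | cons p l1 ih => simp [ih]

lemma assigns_eq_asg {xs : List Xv} {as : List Ag} (h : xs.length = as.length)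
    {φ : Formula Ag Xv Pr} : assigns xs as φ = asg (xs.zip as) φ := by
  induction xs generalizing as with
  | nil => cases as with | nil => rfl | cons a as => simp at h
  | cons x xs ih =>
      cases as with
      | nil => simp at h
      | cons a as => simp [assigns, ih (by simpa using h)]

@[simp] lemma wf_asg {l : List (Xv × Ag)} {φ : Formula Ag Xv Pr} :
    Wf (asg l φ) ↔ Wf φ := by
  induction l with
  | nil => rfl
  | cons p l ih => simpa using ih

lemma fv_asg {l : List (Xv × Ag)} {φ : Formula Ag Xv Pr} :
    FV (asg l φ) = FV φ \ (l.map Prod.fst).toFinset := by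
  induction l with
  | nil => simp
  | cons p l ih =>
      simp only [asg_cons, fv_assign, ih, List.map_cons, List.toFinset_cons]
      ext z; simp; tauto

lemma asg_nec {l : List (Xv × Ag)} {φ : Formula Ag Xv Pr} (h : LEL φ) : LEL (asg l φ) := by
  induction l with
  | nil => exact h
  | cons p l ih => exact .necA ih

/-- K-axiom for iterated assignment -/
lemma asg_k {l : List (Xv × Ag)} {φ ψ : Formula Ag Xv Pr} (hφ : Wf φ) (hψ : Wf ψ) :
    LEL (impl (asg l (impl φ ψ)) (impl (asg l φ) (asg l ψ))) := by
  induction l with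
  | nil => exact lel_id (by simp [hφ, hψ])
  | cons p l ih =>
      have h1 : LEL (.assign p.1 p.2 (impl (asg l (impl φ ψ)) (impl (asg l φ) (asg l ψ)))) :=
        .necA ih
      have h2 : LEL (impl (asg (p :: l) (impl φ ψ))
          (.assign p.1 p.2 (impl (asg l φ) (asg l ψ)))) := by
        simpa using LEL.mp (LEL.kasgn (x := p.1) (a := p.2)
          (by simp [hφ, hψ]) (by simp [hφ, hψ])) h1
      have h3 : LEL (impl (.assign p.1 p.2 (impl (asg l φ) (asg l ψ)))
          (impl (.assign p.1 p.2 (asg l φ)) (.assign p.1 p.2 (asg l ψ)))) :=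
        LEL.kasgn (by simp [hφ]) (by simp [hψ])
      simpa using imp_trans h2 h3

lemma asg_mp {l : List (Xv × Ag)} {φ ψ : Formula Ag Xv Pr}
    (h1 : LEL (asg l (impl φ ψ))) (h2 : LEL (asg l φ)) : LEL (asg l ψ) := by
  have w : Wf (impl φ ψ) := by simpa using wf_of_lel h1
  simp only [wf_impl] at w
  exact .mp (.mp (asg_k w.1 w.2) h1) h2

lemma asg_imp {l : List (Xv × Ag)} {φ ψ : Formula Ag Xv Pr}
    (h : LEL (asg l (impl φ ψ))) : LEL (impl (asg l φ) (asg l ψ)) := by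
  have w : Wf (impl φ ψ) := by simpa using wf_of_lel h
  simp only [wf_impl] at w
  exact .mp (asg_k w.1 w.2) h

lemma asg_lift {l : List (Xv × Ag)} {φ ψ : Formula Ag Xv Pr}
    (h : LEL (impl φ ψ)) : LEL (impl (asg l φ) (asg l ψ)) :=
  asg_imp (asg_nec h)

/-- chaining implications under a prefix -/
lemma asg_chain {l : List (Xv × Ag)} (h1 : LEL (asg l (impl A B)))
    (h2 : LEL (asg l (impl B C))) : LEL (asg l (impl A C)) := by
  have w1 : Wf (impl A B) := by simpa using wf_of_lel h1
  have w2 : Wf (impl B C) := by simpa using wf_of_lel h2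
  simp only [wf_impl] at w1 w2
  exact asg_mp (asg_mp (asg_nec (thm_imp_trans w1.1 w1.2 w2.2)) h1) h2

/-- TR iterated: a formula none of whose free variables are assigned survives a prefix -/
lemma tr_many {l : List (Xv × Ag)} {φ : Formula Ag Xv Pr} (hw : Wf φ)
    (hfv : ∀ v ∈ l.map Prod.fst, v ∉ FV φ) : LEL (impl φ (asg l φ)) := by
  induction l with
  | nil => exact lel_id hw
  | cons p l ih =>
      have h1 : LEL (impl φ (asg l φ)) := ih (fun v hv => hfv v (by simp at hv ⊢; tauto))
      have h2 : LEL (impl (asg l φ) (.assign p.1 p.2 (asg l φ))) := by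
        refine LEL.tr (by simp [hw]) ?_
        rw [fv_asg]
        intro hmem
        exact hfv p.1 (by simp) (Finset.mem_sdiff.mp hmem).1
      simpa using imp_trans h1 h2

lemma subst_self {v : Xv} {φ : Formula Ag Xv Pr} : subst v v φ = φ := by
  induction φ with
  | atom p z => by_cases h : z = v <;> simp [subst, h]
  | top => rfl
  | neg φ ih => simp [subst, ih]
  | and φ ψ ih1 ih2 => simp [subst, ih1, ih2]
  | assign z a φ ih => by_cases h : z = v <;> simp [subst, h, ih]
  | know Xs α ih =>
      simp only [subst, know.injEq, and_true]
      rw [Finset.image_congr (g := id) (fun z _ => by by_cases h : z = v <;> simp [h])]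
      exact Finset.image_id

lemma adm_self {v : Xv} {φ : Formula Ag Xv Pr} : Adm v v φ := by
  induction φ with
  | atom p z => trivial
  | top => trivial
  | neg φ ih => exact ih
  | and φ ψ ih1 ih2 => exact ⟨ih1, ih2⟩
  | assign z a φ ih =>
      by_cases h : z = v
      · exact Or.inl h
      · exact Or.inr (Or.inr ⟨h, ih⟩)
  | know Xs α ih => trivial

/-- `[v:=a]([v:=a]φ → φ)` -/
lemma sub_self {v : Xv} {a : Ag} {φ : Formula Ag Xv Pr} (hw : Wf φ) :
    LEL (.assign v a (impl (.assign v a φ) φ)) := by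
  have := LEL.sub (x := v) (y := v) (a := a) (φ := φ) hw adm_self
  rwa [subst_self] at this

/-- the key "truth axiom" for assignment prefixes: `[l]([l]φ → φ)` -/
lemma asg_self {l : List (Xv × Ag)} {φ : Formula Ag Xv Pr} (hw : Wf φ) :
    LEL (asg l (impl (asg l φ) φ)) := by
  induction l with
  | nil => exact lel_id hw
  | cons p l ih =>
      set C : Formula Ag Xv Pr := impl (.assign p.1 p.2 (asg l φ)) (asg l φ) with hC
      have s1 : LEL (.assign p.1 p.2 C) := sub_self (by simp [hw])
      have s2 : LEL (impl C (asg l C)) := by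
        refine tr_many (by simp [hC, hw]) ?_
        intro v hv
        rw [hC]
        simp only [fv_impl, fv_assign, fv_asg, Finset.mem_union, Finset.mem_sdiff,
          List.mem_toFinset, Finset.mem_singleton, not_or, not_and]
        tauto
      have s3 : LEL (.assign p.1 p.2 (asg l C)) := by
        have := LEL.mp (LEL.kasgn (x := p.1) (a := p.2)
          (by simp [hC, hw]) (by simp [hC, hw])) (.necA s2)
        exact .mp this s1
      -- now combine with IH inside the full prefix
      have s4 : LEL (asg ((p :: l)) (impl (asg l φ) φ)) := by
        exact (LEL.necA ih : LEL (.assign p.1 p.2 (asg l (impl (asg l φ) φ))))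
      have s3' : LEL (asg (p :: l) (impl (.assign p.1 p.2 (asg l φ)) (asg l φ))) := by
        simpa [hC] using s3
      have := asg_chain (l := p :: l) s3' s4
      simpa using this

end Formula
end SimplicialEpistemic

namespace SimplicialEpistemic
namespace Formula
set_option linter.unusedSectionVars false

variable {Ag Xv Pr : Type} [DecidableEq Xv]
variable {A B C γ δ : Formula Ag Xv Pr}

lemma sent_impl (h1 : Sent A) (h2 : Sent B) : Sent (impl A B) :=
  ⟨by simp [h1.1, h2.1], by simp [h1.2, h2.2]⟩

lemma sent_and (h1 : Sent A) (h2 : Sent B) : Sent (.and A B) :=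
  ⟨by simp [h1.1, h2.1], by simp [h1.2, h2.2]⟩

lemma sent_neg (h1 : Sent A) : Sent (.neg A) := ⟨h1.1, h1.2⟩

/-- lift a theorem implication between sentences under `K_X` -/
lemma k_lift {Xs : Finset Xv} (hγ : Sent γ) (hδ : Sent δ) (h : LEL (impl γ δ)) :
    LEL (impl (know Xs γ) (know Xs δ)) := by
  have s : Sent (impl γ δ) := sent_impl hγ hδ
  have h0 : LEL (know (∅ : Finset Xv) (impl γ δ)) := .necK s h
  have h1 : LEL (know Xs (impl γ δ)) :=
    .mp (.mono (Finset.empty_subset Xs) s) h0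
  exact .mp (.kk hγ hδ) h1

lemma k_and {Xs : Finset Xv} (hγ : Sent γ) (hδ : Sent δ) :
    LEL (impl (.and (know Xs γ) (know Xs δ)) (know Xs (.and γ δ))) := by
  have h1 : LEL (impl (know Xs γ) (know Xs (impl δ (.and γ δ)))) :=
    k_lift hγ (sent_impl hδ (sent_and hγ hδ)) (by
      refine .taut (by simp [hγ.1, hδ.1]) ?_
      intro v
      cases u1 : propEval v γ <;> cases u2 : propEval v δ <;> simp [u1, u2])
  have h2 : LEL (impl (know Xs (impl δ (.and γ δ))) (impl (know Xs δ) (know Xs (.and γ δ)))) :=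
    .kk hδ (sent_and hγ hδ)
  exact lel_uncurry (imp_trans h1 h2)

lemma subst_asg {v w : Xv} {l : List (Xv × Ag)} {χ : Formula Ag Xv Pr}
    (h : ∀ z ∈ l.map Prod.fst, z ≠ v) :
    subst v w (asg l χ) = asg l (subst v w χ) := by
  induction l with
  | nil => rfl
  | cons p l ih =>
      have hp : p.1 ≠ v := h p.1 (by simp)
      simp only [asg_cons, subst, if_neg hp]
      exact congrArg _ (ih (fun z hz => h z (by simp [hz])))

lemma adm_asg {v w : Xv} {l : List (Xv × Ag)} {χ : Formula Ag Xv Pr}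
    (h : ∀ z ∈ l.map Prod.fst, z ≠ w) (hχ : Adm v w χ) : Adm v w (asg l χ) := by
  induction l with
  | nil => exact hχ
  | cons p l ih =>
      exact Or.inr (Or.inr ⟨h p.1 (by simp), ih (fun z hz => h z (by simp [hz]))⟩)

lemma image_rename_notMem {v w : Xv} {S : Finset Xv} (h : v ∉ S) :
    S.image (fun z => if z = v then w else z) = S := by
  have heq : ∀ z ∈ S, (if z = v then w else z) = id z := by
    intro z hz
    simp only [id_eq, ite_eq_right_iff]
    intro he
    exact absurd hz (by rw [he]; exact h)
  rw [Finset.image_congr heq, Finset.image_id]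

lemma image_rename_insert {v w : Xv} {S : Finset Xv} (h : v ∉ S) :
    (insert v S).image (fun z => if z = v then w else z) = insert w S := by
  rw [Finset.image_insert, if_pos rfl, image_rename_notMem h]

/-- the key single renaming step: `[v:=b]ψ → [w:=b]ψ[w/v]` -/
lemma rename_step {v w : Xv} {b : Ag} {ψ : Formula Ag Xv Pr} (hw : Wf ψ)
    (hadm : Adm v w ψ) (hfv : w ∉ FV ψ \ {v}) :
    LEL (impl (.assign v b ψ) (.assign w b (subst v w ψ))) := by
  have t1 : LEL (impl (.assign v b ψ) (.assign w b (.assign v b ψ))) :=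
    LEL.tr (by simp [hw]) (by simpa using hfv)
  have t2 : LEL (.assign w b (impl (.assign v b ψ) (subst v w ψ))) :=
    LEL.sub hw hadm
  have t3 : LEL (impl (.assign w b (.assign v b ψ)) (.assign w b (subst v w ψ))) := by
    have := asg_imp (l := [(w, b)]) (φ := .assign v b ψ) (ψ := subst v w ψ)
      (by simpa using t2)
    simpa using this
  exact imp_trans t1 t3

/-- permuting an assignment prefix (over distinct variables) -/
lemma asg_perm {χ : Formula Ag Xv Pr} (hw : Wf χ) :
    ∀ {l l' : List (Xv × Ag)}, l.Perm l' → (l.map Prod.fst).Nodup →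
      LEL (impl (asg l χ) (asg l' χ)) := by
  intro l l' hp
  induction hp with
  | nil => intro _; exact lel_id (by simp [hw])
  | cons p hp ih =>
      intro hnd
      have := ih (by simpa using hnd.of_cons)
      simpa using asg_lift (l := [p]) this
  | swap p q l =>
      intro hnd
      have hne : q.1 ≠ p.1 := by
        simp only [List.map_cons, List.nodup_cons] at hnd
        exact fun he => hnd.1 (by simp [he])
      simpa using LEL.com (φ := asg l χ) (x := q.1) (a := q.2) (y := p.1) (b := p.2)
        (by simp [hw]) hne
  | trans h1 h2 ih1 ih2 =>
      intro hnd
      exact imp_trans (ih1 hnd) (ih2 (((h1.map Prod.fst).nodup_iff).mp hnd))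

/-- existence of fresh lists of variables -/
lemma exists_fresh_list [Infinite Xv] (s : Finset Xv) (n : ℕ) :
    ∃ ws : List Xv, ws.length = n ∧ ws.Nodup ∧ ∀ w ∈ ws, w ∉ s := by
  induction n with
  | zero => exact ⟨[], rfl, List.nodup_nil, by simp⟩
  | succ n ih =>
      obtain ⟨ws, hlen, hnd, hfr⟩ := ih
      obtain ⟨w, hw⟩ := Infinite.exists_notMem_finset (s ∪ ws.toFinset)
      simp only [Finset.mem_union, List.mem_toFinset, not_or] at hw
      exact ⟨w :: ws, by simp [hlen], List.nodup_cons.mpr ⟨hw.2, hnd⟩,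
        by intro z hz; rcases List.mem_cons.mp hz with rfl | hz
           · exact hw.1
           · exact hfr z hz⟩

end Formula
end SimplicialEpistemic

namespace SimplicialEpistemic
namespace Formula
set_option linter.unusedSectionVars false

variable {Ag Xv Pr : Type} [DecidableEq Xv] [DecidableEq Ag]

lemma perm_toFinset {l l' : List Xv} (h : l.Perm l') : l.toFinset = l'.toFinset :=
  Finset.ext fun z => by simp [List.mem_toFinset, h.mem_iff]

/-- THE master monotonicity lemma: a prefix of assignments giving distributed knowledge
for a group can be transformed into any prefix over fresh variables for a supergroup. -/
lemma kmono_master {α : Formula Ag Xv Pr} (hα : Sent α) :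
    ∀ (cs : List Ag) (ws : List Xv) (ps : List (Xv × Ag)) (U : Finset Xv),
      cs.Nodup → ws.Nodup → ws.length = cs.length →
      (ps.map Prod.fst).Nodup → (ps.map Prod.snd).Nodup →
      (∀ a ∈ ps.map Prod.snd, a ∈ cs) →
      (∀ w ∈ ws, w ∉ ps.map Prod.fst ∧ w ∉ U) →
      (∀ v ∈ ps.map Prod.fst, v ∉ U) →
      LEL (impl (asg ps (know (U ∪ (ps.map Prod.fst).toFinset) α))
        (asg (ws.zip cs) (know (U ∪ ws.toFinset) α))) := by
  intro cs
  induction cs with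
  | nil =>
      intro ws ps U _ _ hlen hnd1 hnd2 hsub hfr hU
      have hws : ws = [] := List.length_eq_zero_iff.mp (by simpa using hlen)
      have hps : ps = [] := by
        cases ps with
        | nil => rfl
        | cons p ps => exact absurd (hsub p.2 (by simp)) (by simp)
      subst hws; subst hps
      simpa using lel_id (A := know (U ∪ (∅ : Finset Xv)) α) (by simp [hα.1, hα.2])
  | cons c cs ih =>
      intro ws ps U hndc hndw hlen hnd1 hnd2 hsub hfr hU
      cases ws with
      | nil => simp at hlen
      | cons w ws' =>
      simp only [List.length_cons, List.zip_cons_cons] at hlen ⊢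
      have hlen' : ws'.length = cs.length := by omega
      have hwU : w ∉ U := (hfr w (by simp)).2
      have hwps : w ∉ ps.map Prod.fst := (hfr w (by simp)).1
      have hwws' : w ∉ ws' := (List.nodup_cons.mp hndw).1
      by_cases hc : c ∈ ps.map Prod.snd
      · -- c is among the agents of ps: rename its variable to w
        simp only [List.mem_map] at hc
        obtain ⟨pr, hpr, hprc⟩ := hc
        subst hprc
        obtain ⟨l1, l2, rfl⟩ := List.append_of_mem hpr
        set ps' : List (Xv × Ag) := l1 ++ l2 with hps'
        have hperm : (l1 ++ pr :: l2).Perm (pr :: ps') := List.perm_middle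
        have hfsts : ((l1 ++ pr :: l2).map Prod.fst).Perm (pr.1 :: ps'.map Prod.fst) := by
          simpa using hperm.map Prod.fst
        have hsnds : ((l1 ++ pr :: l2).map Prod.snd).Perm (pr.2 :: ps'.map Prod.snd) := by
          simpa using hperm.map Prod.snd
        have hnd1' : (pr.1 :: ps'.map Prod.fst).Nodup := hfsts.nodup_iff.mp hnd1
        have hnd2' : (pr.2 :: ps'.map Prod.snd).Nodup := hsnds.nodup_iff.mp hnd2
        have hvps' : pr.1 ∉ ps'.map Prod.fst := (List.nodup_cons.mp hnd1').1
        have hcps' : pr.2 ∉ ps'.map Prod.snd := (List.nodup_cons.mp hnd2').1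
        have hps'sub : ∀ z ∈ ps'.map Prod.fst, z ∈ (l1 ++ pr :: l2).map Prod.fst :=
          fun z hz => (hfsts.mem_iff).mpr (by simp [hz])
        have hsetP : ((l1 ++ pr :: l2).map Prod.fst).toFinset
            = insert pr.1 (ps'.map Prod.fst).toFinset := by
          rw [perm_toFinset hfsts]; simp
        have hvU : pr.1 ∉ U := hU pr.1 (List.mem_map.mpr ⟨pr, hpr, rfl⟩)
        set P' := (ps'.map Prod.fst).toFinset with hP'
        set K1 : Formula Ag Xv Pr :=
          know (U ∪ ((l1 ++ pr :: l2).map Prod.fst).toFinset) α with hK1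
        have hwK1 : Wf K1 := by simp [hK1, hα.1, hα.2]
        -- j1 : reorder the prefix
        have j1 : LEL (impl (asg (l1 ++ pr :: l2) K1) (asg (pr :: ps') K1)) :=
          asg_perm hwK1 hperm hnd1
        -- j2 : rename pr.1 into w
        have hvnotUP : pr.1 ∉ U ∪ P' := by
          simp only [Finset.mem_union, hP', List.mem_toFinset]
          rintro (h | h)
          · exact hvU h
          · exact hvps' (by simpa using h)
        have hKsubst : subst pr.1 w K1 = know (insert w (U ∪ P')) α := by
          rw [hK1]
          show know ((U ∪ ((l1 ++ pr :: l2).map Prod.fst).toFinset).image _) α = _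
          rw [hsetP, Finset.union_insert, image_rename_insert hvnotUP]
        have hsubst : subst pr.1 w (asg ps' K1)
            = asg ps' (know (insert w (U ∪ P')) α) := by
          rw [subst_asg (fun z hz he => absurd hz (by rw [he]; exact hvps')), hKsubst]
        have j2 : LEL (impl (.assign pr.1 pr.2 (asg ps' K1))
            (.assign w pr.2 (asg ps' (know (insert w (U ∪ P')) α)))) := by
          rw [← hsubst]
          refine rename_step (by simp [hwK1]) ?_ ?_
          · exact adm_asg (fun z hz he => absurd (hps'sub z hz) (by rw [he]; exact hwps)) trivial
          · rw [fv_asg, hK1]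
            simp only [Finset.mem_sdiff, fv_know, Finset.mem_union, not_and,
              Finset.mem_singleton, List.mem_toFinset]
            intro hmem _
            rcases hmem.1 with h | h
            · exact hwU h
            · exact hwps (by simpa using h)
        -- j3 : induction hypothesis under [w := c]
        have j3 : LEL (impl (asg ps' (know (insert w U ∪ P') α))
            (asg (ws'.zip cs) (know (insert w U ∪ ws'.toFinset) α))) := by
          refine ih ws' ps' (insert w U) hndc.of_cons hndw.of_cons hlen'
            (List.nodup_cons.mp hnd1').2 (List.nodup_cons.mp hnd2').2 ?_ ?_ ?_
          · intro a ha
            have hmm : a ∈ (l1 ++ pr :: l2).map Prod.snd := (hsnds.mem_iff).mpr (by simp [ha])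
            rcases List.mem_cons.mp (hsub a hmm) with rfl | h
            · exact absurd ha hcps'
            · exact h
          · intro w' hw'
            refine ⟨fun hmem => (hfr w' (by simp [hw'])).1 (hps'sub w' hmem), ?_⟩
            simp only [Finset.mem_insert]
            rintro (rfl | h)
            · exact hwws' hw'
            · exact (hfr w' (by simp [hw'])).2 h
          · intro v' hv'
            simp only [Finset.mem_insert]
            rintro (rfl | h)
            · exact hwps (hps'sub v' hv')
            · exact hU v' (hps'sub v' hv') h
        have j4 : LEL (impl (.assign w pr.2 (asg ps' (know (insert w U ∪ P') α)))
            (.assign w pr.2 (asg (ws'.zip cs) (know (insert w U ∪ ws'.toFinset) α)))) := by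
          simpa using asg_lift (l := [(w, pr.2)]) j3
        -- assemble
        have e1 : insert w U ∪ P' = insert w (U ∪ P') := by rw [Finset.insert_union]
        have e2 : insert w U ∪ ws'.toFinset = U ∪ (w :: ws').toFinset := by
          rw [Finset.insert_union, List.toFinset_cons, Finset.union_insert]
        rw [e1, e2] at j4
        have j5 : LEL (impl (asg (l1 ++ pr :: l2) K1)
            (.assign w pr.2 (asg (ws'.zip cs) (know (U ∪ (w :: ws').toFinset) α)))) :=
          imp_trans j1 (imp_trans j2 j4)
        simpa [hK1] using j5
      · -- c is a new agent: fresh assignment in front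
        have h1 := ih ws' ps U hndc.of_cons hndw.of_cons hlen' hnd1 hnd2
          (fun a ha => by
            rcases List.mem_cons.mp (hsub a ha) with rfl | h
            · exact absurd ha hc
            · exact h)
          (fun w' hw' => (hfr w' (by simp [hw']))) hU
        have h2 : LEL (impl (asg (ws'.zip cs) (know (U ∪ ws'.toFinset) α))
            (.assign w c (asg (ws'.zip cs) (know (U ∪ ws'.toFinset) α)))) := by
          refine LEL.tr (by simp [hα.1, hα.2]) ?_
          intro hmem
          rw [fv_asg, List.map_fst_zip (le_of_eq hlen')] at hmem
          simp only [Finset.mem_sdiff, fv_know, Finset.mem_union, List.mem_toFinset] at hmem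
          rcases hmem.1 with h | h
          · exact hwU h
          · exact hmem.2 h
        have h3 : LEL (impl (.assign w c (asg (ws'.zip cs) (know (U ∪ ws'.toFinset) α)))
            (.assign w c (asg (ws'.zip cs) (know (U ∪ (w :: ws').toFinset) α)))) := by
          have hsub' : U ∪ ws'.toFinset ⊆ U ∪ (w :: ws').toFinset := by
            simp only [List.toFinset_cons]
            exact Finset.union_subset_union_right (Finset.subset_insert _ _)
          simpa using asg_lift (l := (w, c) :: ws'.zip cs) (LEL.mono hsub' hα)
        exact imp_trans (imp_trans h1 h2) h3

end Formula
end SimplicialEpistemic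

namespace SimplicialEpistemic
namespace Formula
set_option linter.unusedSectionVars false

variable {Ag Xv Pr : Type} [DecidableEq Xv] [DecidableEq Ag]
variable {A B C : Formula Ag Xv Pr}

/-- full monotonicity: knowledge of a group transfers to any supergroup,
with arbitrary (nodup) variable prefixes. -/
lemma kmono_full [Infinite Xv] {α : Formula Ag Xv Pr} (hα : Sent α)
    {ys zs : List Xv} {bs cs : List Ag}
    (hys : ys.Nodup) (hzs : zs.Nodup) (hbs : bs.Nodup) (hcs : cs.Nodup)
    (hly : ys.length = bs.length) (hlz : zs.length = cs.length)
    (hsub : ∀ a ∈ bs, a ∈ cs) :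
    LEL (impl (asg (ys.zip bs) (know ys.toFinset α))
      (asg (zs.zip cs) (know zs.toFinset α))) := by
  obtain ⟨ws, hwlen, hwnd, hwfr⟩ :=
    exists_fresh_list (Xv := Xv) (ys.toFinset ∪ zs.toFinset) cs.length
  have hmf : (ys.zip bs).map Prod.fst = ys := List.map_fst_zip (le_of_eq hly)
  have hms : (ys.zip bs).map Prod.snd = bs := List.map_snd_zip (le_of_eq hly.symm)
  have hmf2 : (ws.zip cs).map Prod.fst = ws := List.map_fst_zip (le_of_eq hwlen)
  have hms2 : (ws.zip cs).map Prod.snd = cs := List.map_snd_zip (le_of_eq hwlen.symm)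
  have step1 := kmono_master hα cs ws (ys.zip bs) ∅ hcs hwnd hwlen
    (by rw [hmf]; exact hys) (by rw [hms]; exact hbs)
    (by rw [hms]; exact hsub)
    (by intro w hw
        rw [hmf]
        refine ⟨fun hmem => hwfr w hw ?_, by simp⟩
        simp [hmem])
    (by simp)
  have step2 := kmono_master hα cs zs (ws.zip cs) ∅ hcs hzs hlz
    (by rw [hmf2]; exact hwnd) (by rw [hms2]; exact hcs)
    (by rw [hms2]; exact fun a ha => ha)
    (by intro z hz
        rw [hmf2]
        refine ⟨fun hmem => hwfr z hmem ?_, by simp⟩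
        simp [hz])
    (by simp)
  rw [hmf] at step1
  rw [hmf2] at step2
  simp only [Finset.empty_union] at step1 step2
  exact imp_trans step1 step2

/-- if `(v, a) ∈ ps` then `[x:=a] K_{x} γ → [ps] K_{vars ps} γ`. -/
lemma know_member {γ : Formula Ag Xv Pr} (hγ : Sent γ) {x : Xv} :
    ∀ (ps : List (Xv × Ag)), (ps.map Prod.fst).Nodup →
      ∀ pr ∈ ps,
      LEL (impl (.assign x pr.2 (know {x} γ))
        (asg ps (know (ps.map Prod.fst).toFinset γ))) := by
  intro ps
  induction ps with
  | nil => intro _ pr hpr; exact absurd hpr (by simp)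
  | cons q ps' ih =>
      intro hnd pr hpr
      have hndq : q.1 ∉ ps'.map Prod.fst := by
        simp only [List.map_cons, List.nodup_cons] at hnd
        exact hnd.1
      have hnd' : (ps'.map Prod.fst).Nodup := by
        simp only [List.map_cons, List.nodup_cons] at hnd
        exact hnd.2
      rcases List.mem_cons.mp hpr with rfl | hpr'
      · -- head case : rename x to pr.1
        have hsubst : subst x pr.1 (know ({x} : Finset Xv) γ) = know {pr.1} γ := by
          show know (({x} : Finset Xv).image _) γ = _
          rw [Finset.image_singleton, if_pos rfl]
        have r1 : LEL (impl (.assign x pr.2 (know {x} γ))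
            (.assign pr.1 pr.2 (know {pr.1} γ))) := by
          have := rename_step (v := x) (w := pr.1) (b := pr.2)
            (ψ := know ({x} : Finset Xv) γ) (by simp [hγ.1, hγ.2]) trivial (by simp)
          rwa [hsubst] at this
        have r2 : LEL (impl (know ({pr.1} : Finset Xv) γ) (asg ps' (know {pr.1} γ))) := by
          refine tr_many (by simp [hγ.1, hγ.2]) ?_
          intro v hv
          simp only [fv_know, Finset.mem_singleton]
          intro he
          exact hndq (he ▸ hv)
        have r3 : LEL (impl (.assign pr.1 pr.2 (know ({pr.1} : Finset Xv) γ))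
            (.assign pr.1 pr.2 (asg ps' (know {pr.1} γ)))) := by
          simpa using asg_lift (l := [(pr.1, pr.2)]) r2
        have r4 : LEL (impl (.assign pr.1 pr.2 (asg ps' (know ({pr.1} : Finset Xv) γ)))
            (.assign pr.1 pr.2 (asg ps' (know ((pr :: ps').map Prod.fst).toFinset γ)))) := by
          have hsb : ({pr.1} : Finset Xv) ⊆ ((pr :: ps').map Prod.fst).toFinset := by
            simp
          simpa using asg_lift (l := (pr.1, pr.2) :: ps') (LEL.mono hsb hγ)
        have : asg ((pr.1, pr.2) :: ps') (know ((pr :: ps').map Prod.fst).toFinset γ)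
            = .assign pr.1 pr.2 (asg ps' (know ((pr :: ps').map Prod.fst).toFinset γ)) := rfl
        exact imp_trans r1 (imp_trans r3 r4)
      · -- tail case
        have h1 := ih hnd' pr hpr'
        have h2 : LEL (impl (asg ps' (know (ps'.map Prod.fst).toFinset γ))
            (.assign q.1 q.2 (asg ps' (know (ps'.map Prod.fst).toFinset γ)))) := by
          refine LEL.tr (by simp [hγ.1, hγ.2]) ?_
          rw [fv_asg]
          simp
        have h3 : LEL (impl (.assign q.1 q.2 (asg ps' (know (ps'.map Prod.fst).toFinset γ)))
            (.assign q.1 q.2 (asg ps' (know ((q :: ps').map Prod.fst).toFinset γ)))) := by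
          have hsb : (ps'.map Prod.fst).toFinset ⊆ ((q :: ps').map Prod.fst).toFinset := by
            intro z hz; simp at hz ⊢; tauto
          simpa using asg_lift (l := (q.1, q.2) :: ps') (LEL.mono hsb hγ)
        exact imp_trans h1 (imp_trans h2 h3)

/-- and-introduction under a single assignment -/
lemma asg1_and {x : Xv} {a : Ag} (hA : Wf A) (hB : Wf B) :
    LEL (impl (.and (.assign x a A) (.assign x a B)) (.assign x a (.and A B))) := by
  have t : LEL (.assign x a (impl A (impl B (.and A B)))) :=
    .necA (thm_and_intro hA hB)
  have u1 : LEL (impl (.assign x a A) (.assign x a (impl B (.and A B)))) := by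
    simpa using asg_imp (l := [(x, a)]) (by simpa using t)
  have u2 : LEL (impl (.assign x a (impl B (.and A B)))
      (impl (.assign x a B) (.assign x a (.and A B)))) :=
    LEL.kasgn hB (by simp [hA, hB])
  exact lel_uncurry (imp_trans u1 u2)

/-- from `A → (B → C)` conclude `(A ∧ ¬C) → ¬B` -/
lemma shuffle_rule (h : LEL (impl A (impl B C))) :
    LEL (impl (.and A (.neg C)) (.neg B)) := by
  have w := wf_of_lel h; simp only [wf_impl] at w
  refine .mp (.taut (φ := impl (impl A (impl B C)) (impl (.and A (.neg C)) (.neg B)))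
    (by simp [w.1, w.2.1, w.2.2]) ?_) h
  intro v
  cases h1 : propEval v A <;> cases h2 : propEval v B <;> cases h3 : propEval v C <;>
    simp [h1, h2, h3]

/-- contraposition under an assignment prefix -/
lemma asg_contra {l : List (Xv × Ag)} (h : LEL (asg l (impl A B))) :
    LEL (asg l (impl (.neg B) (.neg A))) := by
  have w : Wf (impl A B) := by simpa using wf_of_lel h
  simp only [wf_impl] at w
  exact asg_mp (asg_nec (thm_contrapose w.1 w.2)) h

/-- `⟨x:=a⟩φ → [x:=a] K_x ⟨x:=a⟩φ` from positive introspection of φ, EPI -/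
lemma dia_known {x : Xv} {a : Ag} {φ : Formula Ag Xv Pr} (hwφ : Wf φ)
    (hfvφ : FV φ ⊆ {x})
    (hintro : LEL (.assign x a (impl φ (know {x} (.assign x a φ))))) :
    LEL (impl (dia x a φ) (.assign x a (know {x} (dia x a φ)))) := by
  have hsφ : Sent (.assign x a φ) :=
    ⟨by simp [hwφ], by simp [Finset.sdiff_eq_empty_iff_subset, hfvφ]⟩
  have hsdia : Sent (dia x a φ) :=
    ⟨by simp [hwφ], by simp [Finset.sdiff_eq_empty_iff_subset, hfvφ]⟩
  have hsdiaT : Sent (dia x a (.top : Formula Ag Xv Pr)) := ⟨trivial, by simp [dia]⟩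
  set K1 : Formula Ag Xv Pr := know {x} (.assign x a φ) with hK1
  set K2 : Formula Ag Xv Pr := know {x} (dia x a (.top : Formula Ag Xv Pr)) with hK2
  have hwK1 : Wf K1 := by simp [hK1, hsφ.1, hsφ.2]
  have hwK2 : Wf K2 := by simp [hK2, hsdiaT.1, hsdiaT.2]
  -- step 1 : dia x a φ → [x:=a] K1
  have c1 : LEL (asg [(x, a)] (impl (.neg K1) (.neg φ))) :=
    asg_contra (by simpa using hintro)
  have c2 : LEL (impl (.assign x a (.neg K1)) (.assign x a (.neg φ))) := by
    simpa using asg_imp (l := [(x, a)]) c1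
  have c3 : LEL (impl (dia x a φ) (dia x a K1)) := contrapose_rule c2
  have c4 : LEL (impl (dia x a K1) (.assign x a K1)) := LEL.det hwK1
  have step1 : LEL (impl (dia x a φ) (.assign x a K1)) := imp_trans c3 c4
  -- step 2 : combine with EPI
  have step2 : LEL (impl (dia x a φ)
      (.and (.assign x a K1) (.assign x a K2))) :=
    and_intro_rule step1 (lel_weaken LEL.epi (by simp [hwφ]))
  have step3 : LEL (impl (.and (.assign x a K1) (.assign x a K2))
      (.assign x a (.and K1 K2))) := asg1_and hwK1 hwK2
  -- step 4 : K1 ∧ K2 → K_x (dia x a φ)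
  have core : LEL (impl (.assign x a φ) (impl (.assign x a (.neg φ))
      (.assign x a (.neg .top)))) := by
    have t : LEL (.assign x a (impl φ (impl (.neg φ) (.neg .top)))) := by
      refine .necA (.taut (by simp [hwφ]) ?_)
      intro v; cases h1 : propEval v φ <;> simp [h1]
    have u1 : LEL (impl (.assign x a φ) (.assign x a (impl (.neg φ) (.neg .top)))) := by
      simpa using asg_imp (l := [(x, a)]) (by simpa using t)
    exact imp_trans u1 (LEL.kasgn (by simp [hwφ]) (by simp))
  have merge : LEL (impl (.and (.assign x a φ) (dia x a (.top : Formula Ag Xv Pr)))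
      (dia x a φ)) := shuffle_rule core
  have step4 : LEL (impl (.and K1 K2) (know {x} (dia x a φ))) := by
    refine imp_trans (k_and hsφ hsdiaT) (k_lift (sent_and hsφ hsdiaT) hsdia merge)
  have step5 : LEL (impl (.assign x a (.and K1 K2))
      (.assign x a (know {x} (dia x a φ)))) := by
    simpa using asg_lift (l := [(x, a)]) step4
  exact imp_trans step2 (imp_trans step3 step5)

end Formula
end SimplicialEpistemic

namespace SimplicialEpistemic
namespace Formula
set_option linter.unusedSectionVars false

variable {Ag Xv Pr : Type} [DecidableEq Xv] [DecidableEq Ag]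
variable {A B C : Formula Ag Xv Pr}

lemma fv_bigAnd_empty {l : List (Formula Ag Xv Pr)} (h : ∀ ψ ∈ l, FV ψ = ∅) :
    FV (bigAnd l) = ∅ := by
  induction l with
  | nil => simp [bigAnd]
  | cons ψ l ih =>
      simp only [bigAnd, fv_and, ih (fun χ hχ => h χ (by simp [hχ])), h ψ (by simp)]
      simp

lemma sent_bigAnd {l : List (Formula Ag Xv Pr)} (h : ∀ ψ ∈ l, Sent ψ) :
    Sent (bigAnd l) :=
  ⟨wf_bigAnd.mpr (fun ψ hψ => (h ψ hψ).1), fv_bigAnd_empty (fun ψ hψ => (h ψ hψ).2)⟩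

lemma know_top {Y : Finset Xv} : LEL (know Y (.top : Formula Ag Xv Pr)) := by
  have h0 : LEL (know (∅ : Finset Xv) (.top : Formula Ag Xv Pr)) :=
    .necK ⟨trivial, rfl⟩ (.taut trivial (fun v => rfl))
  exact .mp (.mono (Finset.empty_subset Y) ⟨trivial, rfl⟩) h0

/-- and-introduction under an assignment prefix -/
lemma asgl_and {l : List (Xv × Ag)} (hA : Wf A) (hB : Wf B) :
    LEL (impl (.and (asg l A) (asg l B)) (asg l (.and A B))) := by
  have t : LEL (asg l (impl A (impl B (.and A B)))) := asg_nec (thm_and_intro hA hB)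
  have u1 : LEL (impl (asg l A) (asg l (impl B (.and A B)))) := asg_imp t
  have u2 : LEL (impl (asg l (impl B (.and A B)))
      (impl (asg l B) (asg l (.and A B)))) := asg_k hB (by simp [hA, hB])
  exact lel_uncurry (imp_trans u1 u2)

/-- combining distributed knowledge of a list of sentences under a prefix -/
lemma know_bigAnd {G : Formula Ag Xv Pr} (hwG : Wf G) {p : List (Xv × Ag)} {Y : Finset Xv}
    {l : List (Formula Ag Xv Pr)} (hl : ∀ γ ∈ l, Sent γ)
    (h : ∀ γ ∈ l, LEL (impl G (asg p (know Y γ)))) :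
    LEL (impl G (asg p (know Y (bigAnd l)))) := by
  induction l with
  | nil => exact lel_weaken (asg_nec know_top) hwG
  | cons γ l ih =>
      have h1 : LEL (impl G (.and (asg p (know Y γ)) (asg p (know Y (bigAnd l))))) :=
        and_intro_rule (h γ (by simp))
          (ih (fun χ hχ => hl χ (by simp [hχ])) (fun χ hχ => h χ (by simp [hχ])))
      have hsγ : Sent γ := hl γ (by simp)
      have hsl : Sent (bigAnd l) := sent_bigAnd (fun χ hχ => hl χ (by simp [hχ]))
      have h2 : LEL (impl (.and (asg p (know Y γ)) (asg p (know Y (bigAnd l))))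
          (asg p (.and (know Y γ) (know Y (bigAnd l))))) :=
        asgl_and (by simp [hsγ.1, hsγ.2]) (by simp [hsl.1, hsl.2])
      have h3 : LEL (impl (asg p (.and (know Y γ) (know Y (bigAnd l))))
          (asg p (know Y (.and γ (bigAnd l))))) := asg_lift (k_and hsγ hsl)
      exact imp_trans h1 (imp_trans h2 (imp_trans h3 (asg_lift (lel_id
        (by simp [hsγ.1, hsγ.2, hsl.1, hsl.2, bigAnd])))))

/-- guarded positive introspection for distributed knowledge, from KNI + T -/
lemma k_four {α : Formula Ag Xv Pr} (hα : Sent α) {ys : List Xv} {bs : List Ag}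
    (hnd : ys.Nodup) (hlen : ys.length = bs.length) :
    LEL (asg (ys.zip bs) (impl (know ys.toFinset α)
      (know ys.toFinset (asg (ys.zip bs) (know ys.toFinset α))))) := by
  have hmf : (ys.zip bs).map Prod.fst = ys := List.map_fst_zip (le_of_eq hlen)
  set p := ys.zip bs with hp
  set Y := ys.toFinset with hY
  set K : Formula Ag Xv Pr := know Y α with hK
  set N : Formula Ag Xv Pr := asg p (.neg K) with hN
  set N' : Formula Ag Xv Pr := asg p K with hN'
  have hwK : Wf K := by simp [hK, hα.1, hα.2]
  have sentN : Sent N := by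
    refine ⟨by simp [hN, hwK], ?_⟩
    rw [hN, fv_asg, hmf]
    simp [hK, hY]
  have sentN' : Sent N' := by
    refine ⟨by simp [hN', hwK], ?_⟩
    rw [hN', fv_asg, hmf]
    simp [hK, hY]
  -- (1) : under [p], K → ¬N
  have d0 : LEL (asg p (impl N (.neg K))) := asg_self (by simp [hwK])
  have d1 : LEL (asg p (impl (.neg (.neg K)) (.neg N))) := asg_contra d0
  have d2 : LEL (asg p (impl K (.neg (.neg K)))) := asg_nec (lel_dni hwK)
  have one : LEL (asg p (impl K (.neg N))) := asg_chain d2 d1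
  -- (2) : under [p], K → ¬ K_Y N
  have tc : LEL (impl (.neg N) (.neg (know Y N))) :=
    contrapose_rule (LEL.tK sentN)
  have two : LEL (asg p (impl K (.neg (know Y N)))) := asg_chain one (asg_nec tc)
  -- (3) : KNI instances
  have kni0 : LEL (asg p (impl (.neg K) (know Y N))) := by
    have h := LEL.kni (xs := ys) (as := bs) (α := α) hα hnd hlen
    simp only [assigns_eq_asg hlen]  at h
    rw [← hp, ← hY, ← hK, ← hN] at h
    exact h
  set N2 : Formula Ag Xv Pr := asg p (.neg (know Y N)) with hN2
  have sentN2 : Sent N2 := by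
    refine ⟨by simp [hN2, sentN.1, sentN.2], ?_⟩
    rw [hN2, fv_asg, hmf]
    simp [hY]
  have kni1 : LEL (asg p (impl (.neg (know Y N)) (know Y N2))) := by
    have h := LEL.kni (xs := ys) (as := bs) (α := N) sentN hnd hlen
    simp only [assigns_eq_asg hlen]  at h
    rw [← hp, ← hY, ← hN2] at h
    exact h
  have three : LEL (asg p (impl K (know Y N2))) := asg_chain two kni1
  -- (4) : N2 → N'
  have c : LEL (asg p (impl (.neg (know Y N)) (.neg (.neg K)))) := asg_contra kni0
  have h4a : LEL (asg p (impl (.neg (know Y N)) K)) :=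
    asg_chain c (asg_nec (lel_dne hwK))
  have h4b : LEL (impl N2 N') := asg_imp h4a
  -- (5) : conclude
  have klift : LEL (impl (know Y N2) (know Y N')) := k_lift sentN2 sentN' h4b
  exact asg_chain three (asg_nec klift)

end Formula
end SimplicialEpistemic

namespace SimplicialEpistemic

open Formula

/-- if the defining property `φ` is positively introspective, then
the intensional distributed knowledge `K_φ` satisfies positive introspection. -/
theorem intensional_positive_introspection
    {Ag Xv Pr : Type} [Fintype Ag] [Nonempty Ag] [DecidableEq Ag]
    [DecidableEq Xv] [Countable Xv] [Infinite Xv] [Countable Pr]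
    (x : Xv) (φ : Formula Ag Xv Pr) (hwf : Formula.Wf φ) (hfv : Formula.FV φ ⊆ {x})
    (hintro : ∀ a : Ag,
      LEL (.assign x a (Formula.impl φ (.know {x} (.assign x a φ)))))
    (ea : Finset Ag → List Ag) (ev : Finset Ag → List Xv)
    (hea : ∀ S : Finset Ag, (ea S).Nodup ∧ ∀ a : Ag, a ∈ ea S ↔ a ∈ S)
    (hev : ∀ S : Finset Ag, (ev S).Nodup ∧ (ev S).length = (ea S).length ∧ x ∉ ev S)
    (α : Formula Ag Xv Pr) (hα : Formula.Sent α) :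
    LEL (Formula.impl (Kint φ x ea ev α) (Kint φ x ea ev (Kint φ x ea ev α))) := by
  -- basic sentence facts
  have sentdia : ∀ a : Ag, Sent (dia x a φ) := fun a =>
    ⟨by simp [hwf], by simpa [Finset.sdiff_eq_empty_iff_subset] using hfv⟩
  have sentasgneg : ∀ a : Ag, Sent (.assign x a (.neg φ)) := fun a =>
    ⟨by simp [hwf], by simpa [Finset.sdiff_eq_empty_iff_subset] using hfv⟩
  have sent_bang : ∀ S : Finset Ag, Sent (bang φ x ea S) := by
    intro S
    refine sent_and (sent_bigAnd ?_) (sent_bigAnd ?_) <;>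
      · intro ψ hψ
        obtain ⟨a, _, rfl⟩ := List.mem_map.mp hψ
        first
          | exact sentdia a
          | exact sentasgneg a
  have sent_cons : ∀ (S : Finset Ag) (β : Formula Ag Xv Pr), Sent β →
      Sent (Formula.assigns (ev S) (ea S) (.know (ev S).toFinset β)) := by
    intro S β hβ
    rw [assigns_eq_asg (hev S).2.1]
    refine ⟨by simp [hβ.1, hβ.2], ?_⟩
    rw [fv_asg, List.map_fst_zip (le_of_eq (hev S).2.1)]
    simp
  have sent_Kint : ∀ (β : Formula Ag Xv Pr), Sent β → Sent (Kint φ x ea ev β) := by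
    intro β hβ
    refine sent_bigAnd ?_
    intro ψ hψ
    obtain ⟨S, _, rfl⟩ := List.mem_map.mp hψ
    exact sent_impl (sent_bang S) (sent_cons S β hβ)
  set KA : Formula Ag Xv Pr := Kint φ x ea ev α with hKA
  have sentKA : Sent KA := sent_Kint α hα
  -- the list of conjuncts of `Kint β`
  have wf_kintlist : ∀ (β : Formula Ag Xv Pr), Sent β →
      ∀ ψ ∈ ((Finset.univ : Finset (Finset Ag)).toList).map (fun S =>
        Formula.impl (bang φ x ea S)
          (Formula.assigns (ev S) (ea S) (.know (ev S).toFinset β))), Wf ψ := by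
    intro β hβ ψ hψ
    obtain ⟨S, _, rfl⟩ := List.mem_map.mp hψ
    exact (sent_impl (sent_bang S) (sent_cons S β hβ)).1
  -- main : one conjunct of the outer Kint at a time
  refine bigAnd_intro sentKA.1 ?_
  intro ψout hψout
  obtain ⟨B, hBmem, rfl⟩ := List.mem_map.mp hψout
  -- abbreviations for the group B
  have lenB : (ev B).length = (ea B).length := (hev B).2.1
  have ndysB : (ev B).Nodup := (hev B).1
  have ndbsB : (ea B).Nodup := (hea B).1
  set p : List (Xv × Ag) := (ev B).zip (ea B) with hp
  have hmfB : p.map Prod.fst = ev B := List.map_fst_zip (le_of_eq lenB)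
  have hmsB : p.map Prod.snd = ea B := List.map_snd_zip (le_of_eq lenB.symm)
  set Y : Finset Xv := (ev B).toFinset with hY
  set N' : Formula Ag Xv Pr := asg p (.know Y α) with hN'
  have sentN' : Sent N' := by
    refine ⟨by simp [hN', hα.1, hα.2], ?_⟩
    rw [hN', fv_asg, hmfB]
    simp [hY]
  -- extraction of the B-conjunct of KA
  have e1 : LEL (Formula.impl KA (Formula.impl (bang φ x ea B) N')) := by
    have hm : Formula.impl (bang φ x ea B)
        (Formula.assigns (ev B) (ea B) (.know (ev B).toFinset α))
        ∈ ((Finset.univ : Finset (Finset Ag)).toList).map (fun S =>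
          Formula.impl (bang φ x ea S)
            (Formula.assigns (ev S) (ea S) (.know (ev S).toFinset α))) :=
      List.mem_map.mpr ⟨B, Finset.mem_toList.mpr (Finset.mem_univ B), rfl⟩
    have := bigAnd_elim (wf_kintlist α hα) hm
    rw [assigns_eq_asg lenB, ← hp] at this
    exact this
  set G : Formula Ag Xv Pr := .and KA (bang φ x ea B) with hG
  have hwG : Wf G := by simp [hG, sentKA.1, (sent_bang B).1]
  have g1 : LEL (Formula.impl G N') := lel_uncurry e1
  -- (II) : G → [p] K_Y N'
  have four := k_four hα ndysB lenB
  rw [← hp, ← hY] at four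
  have g2 : LEL (Formula.impl G (asg p (.know Y N'))) := by
    rw [← hN'] at four
    have g1' : LEL (Formula.impl G (asg p (.know Y α))) := by
      rw [hN'] at g1; exact g1
    exact imp_trans g1' (asg_imp four)
  -- (I) : G → [p] K_Y (dia x a φ) for each a ∈ ea B
  have gpos : ∀ a ∈ ea B, LEL (Formula.impl G (asg p (.know Y (dia x a φ)))) := by
    intro a ha
    have hGbang : LEL (Formula.impl G (bang φ x ea B)) :=
      and_right sentKA.1 (sent_bang B).1
    have g3a : LEL (Formula.impl (bang φ x ea B) (dia x a φ)) := by
      refine imp_trans (and_left ?_ ?_) (bigAnd_elim ?_ ?_)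
      · exact (sent_bigAnd (fun ψ hψ => by
          obtain ⟨b, _, rfl⟩ := List.mem_map.mp hψ; exact sentdia b)).1
      · exact (sent_bigAnd (fun ψ hψ => by
          obtain ⟨b, _, rfl⟩ := List.mem_map.mp hψ; exact sentasgneg b)).1
      · intro ψ hψ
        obtain ⟨b, _, rfl⟩ := List.mem_map.mp hψ; exact (sentdia b).1
      · exact List.mem_map.mpr ⟨a, ha, rfl⟩
    have diaK := dia_known hwf hfv (hintro a)
    obtain ⟨pr, hpr, hpr2⟩ := List.mem_map.mp (show a ∈ p.map Prod.snd by rw [hmsB]; exact ha)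
    have memK := know_member (x := x) (sentdia a) p (by rw [hmfB]; exact ndysB) pr hpr
    rw [hpr2, hmfB, ← hY] at memK
    exact imp_trans hGbang (imp_trans g3a (imp_trans diaK memK))
  -- combine : G → [p] K_Y Θ
  set Spos : Formula Ag Xv Pr := bigAnd ((ea B).map fun a => dia x a φ) with hSpos
  have sentSpos : Sent Spos := sent_bigAnd (fun ψ hψ => by
    obtain ⟨b, _, rfl⟩ := List.mem_map.mp hψ; exact sentdia b)
  have gS : LEL (Formula.impl G (asg p (.know Y Spos))) := by
    rw [hSpos]
    refine know_bigAnd hwG ?_ ?_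
    · intro γ hγ
      obtain ⟨b, _, rfl⟩ := List.mem_map.mp hγ; exact sentdia b
    · intro γ hγ
      obtain ⟨b, hb, rfl⟩ := List.mem_map.mp hγ; exact gpos b hb
  set Θ : Formula Ag Xv Pr := .and Spos N' with hΘ
  have sentΘ : Sent Θ := sent_and sentSpos sentN'
  have gΘ : LEL (Formula.impl G (asg p (.know Y Θ))) := by
    have h1 := and_intro_rule gS g2
    have h2 := asgl_and (l := p) (A := .know Y Spos) (B := .know Y N')
      (by simp [sentSpos.1, sentSpos.2]) (by simp [sentN'.1, sentN'.2])
    have h3 := asg_lift (l := p) (k_and (Xs := Y) sentSpos sentN')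
    exact imp_trans h1 (imp_trans h2 h3)
  -- Θ → KA
  have TKA : LEL (Formula.impl Θ KA) := by
    rw [hKA]
    refine bigAnd_intro sentΘ.1 ?_
    intro ψ hψ
    obtain ⟨S, _, rfl⟩ := List.mem_map.mp hψ
    by_cases hBS : ∀ a ∈ ea B, a ∈ ea S
    · -- B ⊆ S : use monotonicity
      have mono := kmono_full (ys := ev B) (zs := ev S) (bs := ea B) (cs := ea S)
        hα ndysB (hev S).1 ndbsB (hea S).1 lenB (hev S).2.1 hBS
      rw [← hp, ← hY, ← hN'] at mono
      have t1 : LEL (Formula.impl Θ N') := and_right sentSpos.1 sentN'.1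
      have t2 := imp_trans t1 mono
      rw [← assigns_eq_asg (hev S).2.1] at t2
      exact imp_weaken_hyp t2 (sent_bang S).1
    · -- B ⊄ S : contradiction from the bang
      push_neg at hBS
      obtain ⟨a, ha, hanotS⟩ := hBS
      have haSc : a ∈ ea Sᶜ := by
        rw [(hea Sᶜ).2 a, Finset.mem_compl]
        intro hmem
        exact hanotS (((hea S).2 a).mpr hmem)
      have hΘd : LEL (Formula.impl Θ (.neg (.assign x a (.neg φ)))) := by
        have : LEL (Formula.impl Θ (dia x a φ)) := by
          refine imp_trans (and_left sentSpos.1 sentN'.1) ?_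
          rw [hSpos]
          refine bigAnd_elim ?_ (List.mem_map.mpr ⟨a, ha, rfl⟩)
          intro χ hχ
          obtain ⟨b, _, rfl⟩ := List.mem_map.mp hχ; exact (sentdia b).1
        exact this
      have hSd : LEL (Formula.impl (bang φ x ea S) (.assign x a (.neg φ))) := by
        refine imp_trans (and_right ?_ ?_) (bigAnd_elim ?_ ?_)
        · exact (sent_bigAnd (fun χ hχ => by
            obtain ⟨b, _, rfl⟩ := List.mem_map.mp hχ; exact sentdia b)).1
        · exact (sent_bigAnd (fun χ hχ => by
            obtain ⟨b, _, rfl⟩ := List.mem_map.mp hχ; exact sentasgneg b)).1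
        · intro χ hχ
          obtain ⟨b, _, rfl⟩ := List.mem_map.mp hχ; exact (sentasgneg b).1
        · exact List.mem_map.mpr ⟨a, haSc, rfl⟩
      exact absurd_rule hΘd hSd (sent_cons S α hα).1
  -- conclusion for the conjunct B
  have final_B : LEL (Formula.impl G (asg p (.know Y KA))) :=
    imp_trans gΘ (asg_lift (k_lift sentΘ sentKA TKA))
  have curry := lel_curry final_B
  rw [assigns_eq_asg lenB, ← hp]
  exact curry

end SimplicialEpistemic
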